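/- Let a, c ≥ 1 be integers, μ ∈ ℤ, and d an integer with d ≡ μ² (mod 4ac²). Let α be a nonzero squarefree integer such that α divides 2a but α does not divide a (equivalently, 2a/α is an odd integer). Then there exist no integers p, q with α·p² − α·d·q² = 4ac and (4ac²/α) dividing (p − μq)². -/
import Mathlib

/-- If `2^(2m+1) ∣ x^2` then `2^(m+1) ∣ x`. -/
lemma aux_pow_dvd : ∀ (m : ℕ) (x : ℤ), (2:ℤ)^(2*m+1) ∣ x^2 → (2:ℤ)^(m+1) ∣ x := by
  intro m
  induction m with
  | zero =>
    intro x hx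
    simpa using (Int.Prime.dvd_pow' (p := 2) (by norm_num) (by simpa using hx))
  | succ m ih =>
    intro x hx
    have h2 : (2:ℤ) ∣ x := by
      apply Int.Prime.dvd_pow' (p := 2) (by norm_num)
      exact dvd_trans (dvd_pow_self 2 (by omega)) hx
    obtain ⟨y, rfl⟩ := h2
    have hy : (2:ℤ)^(2*m+1) ∣ y^2 := by
      have : (2:ℤ)^(2*m+1) * 4 ∣ y^2 * 4 := by
        have : (2:ℤ)^(2*(m+1)+1) ∣ (2*y)^2 := hx
        calc (2:ℤ)^(2*m+1) * 4 = 2^(2*(m+1)+1) := by ring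
          _ ∣ (2*y)^2 := this
          _ = y^2 * 4 := by ring
      exact (mul_dvd_mul_iff_right (by norm_num : (4:ℤ) ≠ 0)).mp this
    obtain ⟨z, hz⟩ := ih y hy
    exact ⟨z, by rw [hz]; ring⟩

/-- claim in the proof of Theorem 3.1.4 that `α ∣ a`.
Let `a, c ≥ 1`, `μ ∈ ℤ`, and `d ≡ μ² (mod 4ac²)`.  Let `α` be a nonzero squarefree
integer with `α ∣ 2a` but `α ∤ a` (equivalently `2a/α` is an odd integer).  Then there
are no integers `p, q` with `αp² − αdq² = 4ac` (i.e. `p² − dq² = 4ac/α`) such that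
`4ac²/α` divides `(p − μq)²`; here `β = 4ac²/α` is the integer with `αβ = 4ac²`. -/
theorem no_solution_when_alpha_not_dvd_a
    (a c : ℤ) (ha : 1 ≤ a) (hc : 1 ≤ c) (μ d : ℤ)
    (hdμ : (4 * a * c ^ 2) ∣ (d - μ ^ 2))
    (α : ℤ) (hα0 : α ≠ 0) (hαsf : Squarefree α)
    (hα2a : α ∣ 2 * a) (hαa : ¬ α ∣ a) :
    ¬ ∃ p q : ℤ, α * p ^ 2 - α * d * q ^ 2 = 4 * a * c ∧
      ∃ β : ℤ, α * β = 4 * a * c ^ 2 ∧ β ∣ (p - μ * q) ^ 2 := by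
  rintro ⟨p, q, heq, β, hβ, hβdvd⟩
  -- write 2a = α k with k odd
  obtain ⟨k, hk⟩ := hα2a
  have hkodd : Odd k := by
    rcases Int.even_or_odd k with hke | hko
    · obtain ⟨k', rfl⟩ := hke
      have h2 : 2 * a = 2 * (α * k') := by rw [hk]; ring
      exact absurd ⟨k', by linarith⟩ hαa
    · exact hko
  -- α is even
  have hαeven : Even α := by
    rcases Int.even_or_odd α with h | h
    · exact h
    · exfalso
      have : Odd (α * k) := h.mul hkodd
      rw [← hk] at this
      exact (Int.not_odd_iff_even.mpr ⟨a, by ring⟩) this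
  -- p² - d q² = 2 k c
  have hpd : p ^ 2 - d * q ^ 2 = 2 * k * c := by
    have h1 : α * (p ^ 2 - d * q ^ 2) = α * (2 * k * c) := by
      rw [mul_sub]
      calc α * p ^ 2 - α * (d * q ^ 2) = α * p ^ 2 - α * d * q ^ 2 := by ring
        _ = 4 * a * c := heq
        _ = 2 * c * (2 * a) := by ring
        _ = 2 * c * (α * k) := by rw [hk]
        _ = α * (2 * k * c) := by ring
    exact mul_left_cancel₀ hα0 h1
  -- β = 2 k c²
  have hβval : β = 2 * k * c ^ 2 := by
    have h1 : α * β = α * (2 * k * c ^ 2) := by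
      rw [hβ]
      calc 4 * a * c ^ 2 = 2 * c ^ 2 * (2 * a) := by ring
        _ = 2 * c ^ 2 * (α * k) := by rw [hk]
        _ = α * (2 * k * c ^ 2) := by ring
    exact mul_left_cancel₀ hα0 h1
  -- d - μ² = 2 α k c² s
  obtain ⟨s, hs⟩ := hdμ
  have hds : d - μ ^ 2 = 2 * α * k * c ^ 2 * s := by
    rw [hs]
    have : 4 * a * c ^ 2 = 2 * α * k * c ^ 2 := by
      have : 2 * a = α * k := hk
      nlinarith [hk]
    rw [this]
  -- p² - μ² q² = 2 k c * u with u odd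
  set u : ℤ := 1 + α * c * s * q ^ 2 with hu
  have huodd : Odd u := by
    obtain ⟨t, ht⟩ := hαeven
    exact ⟨t * c * s * q ^ 2, by rw [hu, ht]; ring⟩
  have hprod : (p - μ * q) * (p + μ * q) = 2 * k * c * u := by
    have : p ^ 2 - μ ^ 2 * q ^ 2 = (p ^ 2 - d * q ^ 2) + (d - μ ^ 2) * q ^ 2 := by ring
    rw [hpd, hds] at this
    calc (p - μ * q) * (p + μ * q) = p ^ 2 - μ ^ 2 * q ^ 2 := by ring
      _ = 2 * k * c + 2 * α * k * c ^ 2 * s * q ^ 2 := this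
      _ = 2 * k * c * u := by rw [hu]; ring
  -- decompose c = 2^n * c' with c' odd
  have hc0 : c.toNat ≠ 0 := by omega
  obtain ⟨n, m, hm2, hcm⟩ := Nat.exists_eq_pow_mul_and_not_dvd hc0 2 (by norm_num)
  have hcval : c = 2 ^ n * (m : ℤ) := by
    have := congrArg (Nat.cast : ℕ → ℤ) hcm
    push_cast at this
    omega
  have hmodd : Odd (m : ℤ) := by
    rw [Int.odd_iff]
    omega
  -- 2^(2n+1) ∣ (p - μq)²
  have h2pow : (2:ℤ) ^ (2 * n + 1) ∣ (p - μ * q) ^ 2 := by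
    refine dvd_trans ?_ hβdvd
    rw [hβval, hcval]
    exact ⟨k * (m:ℤ)^2, by ring⟩
  obtain ⟨e₁, he₁⟩ := aux_pow_dvd n (p - μ * q) h2pow
  -- p + μq is even
  have hfe : Even (p + μ * q) := by
    have h1 : Even (p - μ * q) := by
      refine ⟨2^n * e₁, ?_⟩
      rw [he₁]; ring
    obtain ⟨w, hw⟩ := h1
    exact ⟨w + μ * q, by omega⟩
  obtain ⟨f₁, hf₁⟩ := hfe
  -- contradiction: 2^(n+2) ∣ 2^(n+1) * odd
  have key : (2:ℤ) ^ (n + 1) * (2 * (e₁ * f₁)) = 2 ^ (n + 1) * (k * (m:ℤ) * u) := by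
    calc (2:ℤ) ^ (n + 1) * (2 * (e₁ * f₁)) = (2^(n+1) * e₁) * (f₁ + f₁) := by ring
      _ = (p - μ * q) * (p + μ * q) := by rw [← he₁, ← hf₁]
      _ = 2 * k * c * u := hprod
      _ = 2 ^ (n + 1) * (k * (m:ℤ) * u) := by rw [hcval]; ring
  have key2 : 2 * (e₁ * f₁) = k * (m:ℤ) * u :=
    mul_left_cancel₀ (by positivity) key
  have : Odd (k * (m:ℤ) * u) := (hkodd.mul hmodd).mul huodd
  rw [← key2] at this
  exact (Int.not_odd_iff_even.mpr ⟨e₁ * f₁, by ring⟩) this
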